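/- Let ω ∈ (0,1) be irrational, let n ≥ 1, and let ℓ be an integer with 1 ≤ ℓ ≤ a_{n+1}/4. Then: (i) for every integer k with ℓ·q_n < k < (ℓ+1)·q_n, one has ‖k·ω‖ ≥ (3/4)·‖q_{n−1}·ω‖; and (ii) for every real Q > 0, Σ_{k ∈ ℤ, ℓ·q_n < k < (ℓ+1)·q_n} 1/(1 + Q²·‖k·ω‖²) ≤ 4π·q_n/Q. -/

import Mathlib

open MeasureTheory Filter

noncomputable section

/-- Distance from `x` to the nearest integer. -/
def distZ (x : ℝ) : ℝ := |x - round x|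

/-- One-step transfer matrix. -/
def oneStep (v : ℂ → ℂ) (E : ℂ) (z : ℂ) : Matrix (Fin 2) (Fin 2) ℂ :=
  !![E - v z, -1; 1, 0]

/-- `m`-step transfer matrix. -/
def transfer (v : ℂ → ℂ) (ω : ℝ) (E : ℂ) : ℕ → ℂ → Matrix (Fin 2) (Fin 2) ℂ
  | 0, _ => 1
  | m + 1, z => transfer v ω E m (z + (ω : ℂ)) * oneStep v E z

/-- Operator (`ℓ²`) norm of a 2×2 complex matrix. -/
def opNorm2 (A : Matrix (Fin 2) (Fin 2) ℂ) : ℝ :=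
  ‖Matrix.toEuclideanCLM (𝕜 := ℂ) A‖

/-- `u_{m,E}` at a (complexified) phase. -/
def uFun (v : ℂ → ℂ) (ω : ℝ) (E : ℂ) (m : ℕ) (z : ℂ) : ℝ :=
  (1 / (m : ℝ)) * Real.log (opNorm2 (transfer v ω E m z))

/-- Finite-scale Lyapunov exponent `L_m(ω,E,ε)`. -/
def LyapFS (v : ℂ → ℂ) (ω : ℝ) (E : ℂ) (m : ℕ) (ε : ℝ) : ℝ :=
  ∫ θ in (0:ℝ)..1, uFun v ω E m ((θ : ℂ) + (ε : ℂ) * Complex.I)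

/-- Lyapunov exponent `L(ω,E,ε)` (limit of `L_m`, realized as a `limsup`). -/
def Lyap (v : ℂ → ℂ) (ω : ℝ) (E : ℂ) (ε : ℝ) : ℝ :=
  limsup (fun m : ℕ => LyapFS v ω E m ε) atTop

/-- Avila's acceleration `κ(ω,E)` (right derivative at `ε = 0`, realized as a limsup). -/
def accel (v : ℂ → ℂ) (ω : ℝ) (E : ℂ) : ℝ :=
  limsup (fun ε : ℝ => (Lyap v ω E ε - Lyap v ω E 0) / (2 * Real.pi * ε))
    (nhdsWithin 0 (Set.Ioi 0))

/-- Gauss map. -/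
def gaussMap (x : ℝ) : ℝ := Int.fract x⁻¹

/-- Partial quotients of the continued fraction of `ω`; `cfA ω n = aₙ` for `n ≥ 1`. -/
def cfA (ω : ℝ) (n : ℕ) : ℕ := ⌊(gaussMap^[n - 1] ω)⁻¹⌋₊

/-- Denominators of the continued fraction approximants of `ω`. -/
def cfQ (ω : ℝ) : ℕ → ℕ
  | 0 => 1
  | 1 => cfA ω 1
  | n + 2 => cfA ω (n + 2) * cfQ ω (n + 1) + cfQ ω n

/-- `β(ω) = limsup (log q_{n+1})/q_n`, as an extended real. -/
def betaE (ω : ℝ) : EReal :=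
  limsup (fun n : ℕ => ((Real.log (cfQ ω (n + 1)) / (cfQ ω n : ℝ) : ℝ) : EReal)) atTop

/-- Real value of `β(ω)`. -/
def betaR (ω : ℝ) : ℝ := (betaE ω).toReal

/-- `k`-th Fourier coefficient of a function on `𝕋 = ℝ/ℤ`. -/
def fourierCoeff01 (g : ℝ → ℂ) (k : ℤ) : ℂ :=
  ∫ θ in (0:ℝ)..1, g θ * Complex.exp (-2 * Real.pi * Complex.I * (k : ℂ) * (θ : ℂ))

/-- `k`-th Fourier coefficient of `u_{m,E}`. -/
def uhat (v : ℂ → ℂ) (ω : ℝ) (E : ℂ) (m : ℕ) (k : ℤ) : ℂ :=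
  fourierCoeff01 (fun θ : ℝ => ((uFun v ω E m (θ : ℂ) : ℝ) : ℂ)) k

/-- Fejér kernel along `ω`. -/
def fejer (ω : ℝ) (Q : ℕ) (k : ℤ) : ℂ :=
  ∑ j ∈ Finset.Ioo (-(Q : ℤ)) (Q : ℤ),
    ((((Q : ℝ) - |(j : ℝ)|) / (Q : ℝ) ^ 2 : ℝ) : ℂ) *
      Complex.exp (2 * Real.pi * Complex.I * (k : ℂ) * (j : ℂ) * (ω : ℂ))

/-- Open annulus `𝒜_R`. -/
def annulus (R : ℝ) : Set ℂ := {z : ℂ | 1 / R < ‖z‖ ∧ ‖z‖ < R}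

/-- Closed annulus. -/
def closedAnnulus (R : ℝ) : Set ℂ := {z : ℂ | 1 / R ≤ ‖z‖ ∧ ‖z‖ ≤ R}

/-- Regular part `Γ_R` of the Green's function of the annulus `𝒜_R`. -/
def GammaR (R : ℝ) (z w : ℂ) : ℝ :=
  Real.log (‖z‖ / R) * Real.log (‖w‖ / R) / (4 * Real.pi * Real.log R)
    + (1 / (2 * Real.pi)) * Real.log
      ((∏' k : ℕ, (‖1 - (R : ℂ) ^ (-(4 * ((k : ℤ) + 1))) * z / w‖
          * ‖1 - (R : ℂ) ^ (-(4 * ((k : ℤ) + 1))) * w / z‖))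
        / (R * ∏' k : ℕ, (‖1 - (R : ℂ) ^ (-(4 * ((k : ℤ) + 1) - 2)) * w * (starRingEnd ℂ) z‖
          * ‖1 - (R : ℂ) ^ (-(4 * ((k : ℤ) + 1) - 2)) / ((starRingEnd ℂ) z * w)‖)))

/-- Green's function `G_R` of the annulus `𝒜_R`. -/
def greenR (R : ℝ) (z w : ℂ) : ℝ :=
  (1 / (2 * Real.pi)) * Real.log (‖z - w‖) + GammaR R z w

/-- Second directional derivative of `f : ℂ → ℝ` at `z` in direction `v`. -/
def secondDirDeriv (f : ℂ → ℝ) (v z : ℂ) : ℝ :=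
  deriv (deriv (fun t : ℝ => f (z + t • v))) 0

/-- Harmonicity of `f` on a set `S ⊆ ℂ`. -/
def HarmonicOnSet (f : ℂ → ℝ) (S : Set ℂ) : Prop :=
  ContDiffOn ℝ 2 f S ∧ ∀ z ∈ S, secondDirDeriv f 1 z + secondDirDeriv f Complex.I z = 0

namespace CF16

def X (ω : ℝ) (n : ℕ) : ℝ := gaussMap^[n] ω
def D (ω : ℝ) (n : ℕ) : ℝ := ∏ i ∈ Finset.range n, X ω i

def QQ (ω : ℝ) : ℕ → ℤ
  | 0 => 0
  | 1 => 1
  | n + 2 => (cfA ω (n + 1) : ℤ) * QQ ω (n + 1) + QQ ω n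

def P (ω : ℝ) : ℕ → ℤ
  | 0 => 1
  | 1 => 0
  | n + 2 => (cfA ω (n + 1) : ℤ) * P ω (n + 1) + P ω n

variable {ω : ℝ}

theorem hX (hω : ω ∈ Set.Ioo (0:ℝ) 1) (hirr : Irrational ω) (n : ℕ) :
    X ω n ∈ Set.Ioo (0:ℝ) 1 ∧ Irrational (X ω n) := by
  induction n with
  | zero => exact ⟨hω, hirr⟩
  | succ n ih =>
    obtain ⟨⟨h0, h1⟩, hi⟩ := ih
    have hx : X ω (n+1) = gaussMap (X ω n) := Function.iterate_succ_apply' _ _ _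
    have hinv : Irrational (X ω n)⁻¹ := hi.inv
    have hfr : Irrational (Int.fract (X ω n)⁻¹) := by
      rw [Int.fract]
      exact hinv.sub_intCast _
    constructor
    · rw [hx]
      refine ⟨?_, Int.fract_lt_one _⟩
      rcases lt_or_eq_of_le (Int.fract_nonneg (X ω n)⁻¹) with h | h
      · exact h
      · exfalso
        rw [← h] at hfr
        exact hfr ⟨0, by norm_num⟩
    · rwa [hx]

theorem hXrec (hω : ω ∈ Set.Ioo (0:ℝ) 1) (hirr : Irrational ω) (n : ℕ) :
    X ω (n+1) = (X ω n)⁻¹ - (cfA ω (n+1) : ℝ) := by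
  have h0 : (0:ℝ) < X ω n := (hX hω hirr n).1.1
  have : (cfA ω (n+1) : ℝ) = (⌊(X ω n)⁻¹⌋ : ℝ) := by
    rw [cfA]
    simp only [Nat.add_sub_cancel]
    exact natCast_floor_eq_intCast_floor (by positivity)
  have hx : X ω (n+1) = Int.fract (X ω n)⁻¹ := by
    rw [X, Function.iterate_succ_apply']; rfl
  rw [hx, this, Int.fract]

theorem hA1 (hω : ω ∈ Set.Ioo (0:ℝ) 1) (hirr : Irrational ω) (n : ℕ) :
    1 ≤ cfA ω (n+1) := by
  have h := (hX hω hirr n).1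
  have : (1:ℝ) ≤ (X ω n)⁻¹ := le_of_lt ((one_lt_inv₀ h.1).mpr h.2)
  rw [cfA]
  simp only [Nat.add_sub_cancel]
  exact Nat.le_floor (by exact_mod_cast this)

theorem D_succ (ω : ℝ) (n : ℕ) : D ω (n+1) = D ω n * X ω n := Finset.prod_range_succ _ _

theorem D_pos (hω : ω ∈ Set.Ioo (0:ℝ) 1) (hirr : Irrational ω) (n : ℕ) : 0 < D ω n := by
  induction n with
  | zero => simp [D]
  | succ n ih => rw [D_succ]; exact mul_pos ih (hX hω hirr n).1.1

theorem D_mono (hω : ω ∈ Set.Ioo (0:ℝ) 1) (hirr : Irrational ω) (n : ℕ) :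
    D ω (n+1) ≤ D ω n := by
  rw [D_succ]
  nlinarith [D_pos hω hirr n, (hX hω hirr n).1.1, (hX hω hirr n).1.2]

theorem D_rec (hω : ω ∈ Set.Ioo (0:ℝ) 1) (hirr : Irrational ω) (n : ℕ) :
    D ω (n+2) = D ω n - (cfA ω (n+1) : ℝ) * D ω (n+1) := by
  have h0 : X ω n ≠ 0 := ne_of_gt (hX hω hirr n).1.1
  rw [D_succ, D_succ, hXrec hω hirr n]
  field_simp

theorem hE (hω : ω ∈ Set.Ioo (0:ℝ) 1) (hirr : Irrational ω) (n : ℕ) :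
    (QQ ω n : ℝ) * ω - (P ω n : ℝ) = (-1)^(n+1) * D ω n := by
  induction n using Nat.twoStepInduction with
  | zero => simp [QQ, P, D]
  | one =>
    have : D ω 1 = ω := by rw [D_succ]; simp [D, X]
    simp [QQ, P, this]
  | more n ih1 ih2 =>
    have hd := D_rec hω hirr n
    simp only [QQ, P, Int.cast_add, Int.cast_mul, Int.cast_natCast]
    have : ((-1:ℝ))^(n+2+1) = (-1)^(n+1) := by ring
    rw [this, hd]
    have h2 : ((-1:ℝ))^(n+1+1) = -(-1)^(n+1) := by ring
    linear_combination (cfA ω (n+1):ℝ) * ih2 + ih1 + ((cfA ω (n+1):ℝ) * D ω (n+1)) * h2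
theorem hS (hω : ω ∈ Set.Ioo (0:ℝ) 1) (hirr : Irrational ω) (n : ℕ) :
    (QQ ω (n+1) : ℝ) * D ω n + (QQ ω n : ℝ) * D ω (n+1) = 1 := by
  induction n with
  | zero => simp [QQ, D]
  | succ n ih =>
    have hd := D_rec hω hirr n
    show (QQ ω (n+2) : ℝ) * D ω (n+1) + (QQ ω (n+1) : ℝ) * D ω (n+2) = 1
    simp only [QQ, Int.cast_add, Int.cast_mul, Int.cast_natCast]
    rw [hd]
    linear_combination ih

theorem hdet (n : ℕ) :
    QQ ω (n+1) * P ω n - QQ ω n * P ω (n+1) = (-1)^n := by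
  induction n with
  | zero => simp [QQ, P]
  | succ n ih =>
    show QQ ω (n+2) * P ω (n+1) - QQ ω (n+1) * P ω (n+2) = (-1)^(n+1)
    simp only [QQ, P]
    have : ((-1:ℤ))^(n+1) = -(-1)^n := by ring
    rw [this]
    linear_combination -ih

theorem hQ (hω : ω ∈ Set.Ioo (0:ℝ) 1) (hirr : Irrational ω) (n : ℕ) :
    0 ≤ QQ ω n ∧ QQ ω n ≤ QQ ω (n+1) ∧ 1 ≤ QQ ω (n+1) := by
  induction n with
  | zero => refine ⟨le_refl _, ?_, le_refl _⟩ <;> simp [QQ]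
  | succ n ih =>
    obtain ⟨h0, h2, h1⟩ := ih
    have ha : (1:ℤ) ≤ (cfA ω (n+1) : ℤ) := by exact_mod_cast hA1 hω hirr n
    have hrec : QQ ω (n+2) = (cfA ω (n+1) : ℤ) * QQ ω (n+1) + QQ ω n := rfl
    have h01 : (0:ℤ) ≤ QQ ω (n+1) := le_trans zero_le_one h1
    refine ⟨h01, ?_, le_trans h1 ?_⟩ <;> · rw [hrec]; nlinarith

theorem QQcast (hω : ω ∈ Set.Ioo (0:ℝ) 1) (hirr : Irrational ω) (n : ℕ) :
    (cfQ ω n : ℤ) = QQ ω (n+1) := by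
  induction n using Nat.twoStepInduction with
  | zero => simp [cfQ, QQ]
  | one => simp [cfQ, QQ]
  | more n ih1 ih2 =>
    show (cfQ ω (n+2) : ℤ) = QQ ω (n+3)
    rw [cfQ]
    push_cast
    rw [ih1, ih2]
    show _ = (cfA ω (n+2) : ℤ) * QQ ω (n+2) + QQ ω (n+1)
    ring
theorem BA (hω : ω ∈ Set.Ioo (0:ℝ) 1) (hirr : Irrational ω) (n : ℕ) (hn : 1 ≤ n)
    (r s : ℤ) (hr0 : r ≠ 0) (hr : |r| < QQ ω (n+1)) :
    D ω n ≤ |(r:ℝ) * ω - (s:ℝ)| := by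
  set u : ℤ := (-1)^n * (r * P ω n - s * QQ ω n) with hu
  set v : ℤ := (-1)^n * (s * QQ ω (n+1) - r * P ω (n+1)) with hv
  have hsq : (-1:ℤ)^n * (-1)^n = 1 := by
    rw [← pow_add]; exact Even.neg_one_pow ⟨n, by ring⟩
  have hd := hdet (ω := ω) n
  have huv1 : u * QQ ω (n+1) + v * QQ ω n = r := by
    rw [hu, hv]; linear_combination ((-1:ℤ)^n * r) * hd + r * hsq
  have huv2 : u * P ω (n+1) + v * P ω n = s := by
    rw [hu, hv]; linear_combination ((-1:ℤ)^n * s) * hd + s * hsq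
  have hc1 : (u:ℝ) * (QQ ω (n+1) : ℝ) + (v:ℝ) * (QQ ω n : ℝ) = (r:ℝ) := by
    exact_mod_cast huv1
  have hc2 : (u:ℝ) * (P ω (n+1) : ℝ) + (v:ℝ) * (P ω n : ℝ) = (s:ℝ) := by
    exact_mod_cast huv2
  have hre : (r:ℝ) * ω - s = (-1:ℝ)^n * ((u:ℝ) * D ω (n+1) - (v:ℝ) * D ω n) := by
    linear_combination (u:ℝ) * (hE hω hirr (n+1)) + (v:ℝ) * (hE hω hirr n)
      - ω * hc1 + hc2
  have habs : |(r:ℝ) * ω - s| = |(u:ℝ) * D ω (n+1) - (v:ℝ) * D ω n| := by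
    rw [hre, abs_mul, abs_pow, abs_neg, abs_one, one_pow, one_mul]
  obtain ⟨m, rfl⟩ := Nat.exists_eq_add_of_le hn
  have hDn := D_pos hω hirr (1+m)
  have hDn1 := D_pos hω hirr (1+m+1)
  have hQn : 1 ≤ QQ ω (1+m) := by
    have := (hQ hω hirr m).2.2; rwa [Nat.add_comm m 1] at this
  have hQn1 : 1 ≤ QQ ω (1+m+1) := (hQ hω hirr (1+m)).2.2
  obtain ⟨hrl, hru⟩ := abs_lt.mp hr
  rw [habs]
  rcases lt_trichotomy v 0 with hv0 | hv0 | hv0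
  · rcases le_or_gt 0 u with hu0 | hu0
    · have h1 : (1:ℝ) ≤ -(v:ℝ) := by
        have : v ≤ -1 := by omega
        have : (v:ℝ) ≤ -1 := by exact_mod_cast this
        linarith
      have h0 : (0:ℝ) ≤ (u:ℝ) := by exact_mod_cast hu0
      refine le_trans ?_ (le_abs_self _)
      nlinarith
    · exfalso
      have h5 : u ≤ -1 := by omega
      have h6 : v ≤ -1 := by omega
      nlinarith [huv1]
  · rw [hv0] at huv1 habs ⊢
    exfalso
    have hu0 : u ≠ 0 := by
      intro h; rw [h] at huv1; simp at huv1; omega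
    rcases lt_or_gt_of_ne hu0 with h | h
    · have : u ≤ -1 := by omega
      nlinarith [huv1]
    · have : 1 ≤ u := h
      nlinarith [huv1]
  · rcases le_or_gt u 0 with hu0 | hu0
    · have h1 : (1:ℝ) ≤ (v:ℝ) := by exact_mod_cast hv0
      have h0 : (u:ℝ) ≤ 0 := by exact_mod_cast hu0
      refine le_abs.mpr (Or.inr ?_)
      nlinarith
    · exfalso
      have : 1 ≤ u := hu0
      have : 1 ≤ v := hv0
      nlinarith [huv1]
theorem distZ_le (x : ℝ) (m : ℤ) : distZ x ≤ |x - (m:ℝ)| := by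
  rcases eq_or_ne m (round x) with h | h
  · rw [distZ, h]
  · have h1 : |x - (round x : ℝ)| ≤ 1/2 := abs_sub_round x
    have h2 : (1:ℝ) ≤ |((round x : ℤ) : ℝ) - (m:ℝ)| := by
      have : ((1:ℤ):ℝ) ≤ |((round x - m : ℤ) : ℝ)| := by
        rw [← Int.cast_abs]
        exact_mod_cast Int.one_le_abs (sub_ne_zero.mpr (Ne.symm h))
      push_cast at this ⊢
      convert this using 2
    have h3 : |((round x:ℤ):ℝ) - m| ≤ |(round x:ℝ) - x| + |x - m| := abs_sub_le _ _ _
    rw [abs_sub_comm (round x : ℝ) x] at h3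
    rw [distZ]
    push_cast at h3 ⊢
    linarith

theorem distZ_nonneg (x : ℝ) : 0 ≤ distZ x := abs_nonneg _

theorem hAD (hω : ω ∈ Set.Ioo (0:ℝ) 1) (hirr : Irrational ω) (n : ℕ) :
    (cfA ω (n+1) : ℝ) * D ω (n+1) ≤ D ω n := by
  have h := D_rec hω hirr n
  nlinarith [D_pos hω hirr (n+2)]

theorem hQE (hω : ω ∈ Set.Ioo (0:ℝ) 1) (hirr : Irrational ω) (n : ℕ) :
    |(QQ ω n : ℝ) * ω - (P ω n : ℝ)| = D ω n := by
  rw [hE hω hirr n, abs_mul, abs_pow, abs_neg, abs_one, one_pow, one_mul,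
    abs_of_pos (D_pos hω hirr n)]

theorem key (hω : ω ∈ Set.Ioo (0:ℝ) 1) (hirr : Irrational ω) (n : ℕ) (hn : 1 ≤ n)
    (ℓ : ℤ) (hℓ1 : 1 ≤ ℓ) (hℓ2 : (ℓ:ℝ) ≤ (cfA ω (n+1) : ℝ)/4)
    (k t : ℤ) (h1 : ℓ * QQ ω (n+1) < k) (h2 : k < (ℓ+1) * QQ ω (n+1)) :
    3/4 * D ω n ≤ |(k:ℝ) * ω - (t:ℝ)| := by
  set r : ℤ := k - ℓ * QQ ω (n+1) with hrdef
  set s : ℤ := t - ℓ * P ω (n+1) with hsdef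
  have hr1 : 0 < r := by omega
  have hr2 : r < QQ ω (n+1) := by
    have : (ℓ+1) * QQ ω (n+1) = ℓ * QQ ω (n+1) + QQ ω (n+1) := by ring
    omega
  have hBA := BA hω hirr n hn r s (by omega) (by rw [abs_of_pos hr1]; exact hr2)
  have hsplit : (k:ℝ) * ω - t
      = ((r:ℝ) * ω - s) + (ℓ:ℝ) * ((QQ ω (n+1) : ℝ) * ω - (P ω (n+1) : ℝ)) := by
    rw [hrdef, hsdef]; push_cast; ring
  have h6 : |(ℓ:ℝ) * ((QQ ω (n+1) : ℝ) * ω - (P ω (n+1) : ℝ))| = (ℓ:ℝ) * D ω (n+1) := by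
    rw [abs_mul, hQE hω hirr (n+1), abs_of_pos (by exact_mod_cast hℓ1 : (0:ℝ) < (ℓ:ℝ))]
  have h7 : |(r:ℝ) * ω - s| ≤ |(k:ℝ) * ω - t| + |(ℓ:ℝ) * ((QQ ω (n+1):ℝ) * ω - (P ω (n+1):ℝ))| := by
    rw [hsplit]
    have := abs_sub ((r:ℝ) * ω - s + (ℓ:ℝ) * ((QQ ω (n+1):ℝ) * ω - (P ω (n+1):ℝ)))
      ((ℓ:ℝ) * ((QQ ω (n+1):ℝ) * ω - (P ω (n+1):ℝ)))
    calc |(r:ℝ) * ω - s| = |((r:ℝ) * ω - s + (ℓ:ℝ) * ((QQ ω (n+1):ℝ) * ω - (P ω (n+1):ℝ)))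
          - (ℓ:ℝ) * ((QQ ω (n+1):ℝ) * ω - (P ω (n+1):ℝ))| := by ring_nf
      _ ≤ _ := abs_sub _ _
  have h8 : (ℓ:ℝ) * D ω (n+1) ≤ D ω n / 4 := by
    have hA := hAD hω hirr n
    have hD1 := D_pos hω hirr (n+1)
    nlinarith
  rw [h6] at h7
  linarith
theorem floor_lt_floor_of_add_one_le {a b : ℝ} (h : a + 1 ≤ b) : ⌊a⌋ < ⌊b⌋ := by
  have h1 : ⌊a + 1⌋ ≤ ⌊b⌋ := Int.floor_le_floor h
  have h2 : ⌊a + (1:ℝ)⌋ = ⌊a⌋ + 1 := by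
    rw [show ((1:ℝ)) = ((1:ℤ):ℝ) by norm_num, Int.floor_add_intCast]
  omega

theorem count_sep {T : Finset ℤ} {g : ℤ → ℝ} {δ t : ℝ} (hδ : 0 < δ) (ht : 0 ≤ t)
    (hmem : ∀ k ∈ T, |g k| ≤ t)
    (hsep : ∀ k ∈ T, ∀ k' ∈ T, k ≠ k' → δ ≤ |g k - g k'|) :
    (T.card : ℝ) ≤ 2 * t / δ + 1 := by
  have hinj : Set.InjOn (fun k => ⌊(g k + t) / δ⌋) T := by
    intro a ha b hb hab
    by_contra hne
    have h1 := hsep a ha b hb hne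
    simp only at hab
    rcases le_abs.mp h1 with h | h
    · have h3 : (g b + t) / δ + 1 ≤ (g a + t) / δ := by
        rw [show (g b + t) / δ + 1 = (g b + t + δ) / δ by field_simp,
          div_le_div_iff₀ hδ hδ]
        nlinarith
      have := floor_lt_floor_of_add_one_le h3
      omega
    · have h3 : (g a + t) / δ + 1 ≤ (g b + t) / δ := by
        rw [show (g a + t) / δ + 1 = (g a + t + δ) / δ by field_simp,
          div_le_div_iff₀ hδ hδ]
        nlinarith
      have := floor_lt_floor_of_add_one_le h3
      omega
  have hsub : ∀ k ∈ T, ⌊(g k + t) / δ⌋ ∈ Finset.Icc (0:ℤ) ⌊2 * t / δ⌋ := by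
    intro k hk
    obtain ⟨hl, hu⟩ := abs_le.mp (hmem k hk)
    refine Finset.mem_Icc.mpr ⟨Int.floor_nonneg.mpr (div_nonneg (by linarith) hδ.le), ?_⟩
    apply Int.floor_le_floor
    rw [div_le_div_iff₀ hδ hδ]
    nlinarith
  have hcard : T.card ≤ (Finset.Icc (0:ℤ) ⌊2 * t / δ⌋).card :=
    Finset.card_le_card_of_injOn _ hsub hinj
  have h4 : (Finset.Icc (0:ℤ) ⌊2 * t / δ⌋).card = (⌊2 * t / δ⌋ + 1).toNat := by
    rw [Int.card_Icc]
    congr 1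
    omega
  have h5 : (0:ℤ) ≤ ⌊2 * t / δ⌋ := Int.floor_nonneg.mpr (by positivity)
  have h6 : ((⌊2 * t / δ⌋ + 1).toNat : ℝ) = (⌊2 * t / δ⌋ : ℝ) + 1 := by
    have h7 : ((⌊2 * t / δ⌋ + 1).toNat : ℤ) = ⌊2 * t / δ⌋ + 1 := Int.toNat_of_nonneg (by omega)
    exact_mod_cast h7
  calc (T.card : ℝ) ≤ ((⌊2 * t / δ⌋ + 1).toNat : ℝ) := by exact_mod_cast hcard.trans_eq h4
    _ = (⌊2 * t / δ⌋ : ℝ) + 1 := h6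
    _ ≤ 2 * t / δ + 1 := by linarith [Int.floor_le (2 * t / δ)]
theorem arctan_step (c : ℝ) (hc : 0 < c) (i : ℕ) :
    1 / (1 + c^2 * ((i:ℝ)+1)^2) ≤ (Real.arctan (c*((i:ℝ)+1)) - Real.arctan (c*i)) / c := by
  have hab : c * (i:ℝ) < c * ((i:ℝ)+1) := by nlinarith
  obtain ⟨ξ, hξ, hslope⟩ := exists_hasDerivAt_eq_slope Real.arctan (fun x => 1/(1+x^2)) hab
    (Real.continuous_arctan.continuousOn) (fun x _ => Real.hasDerivAt_arctan x)
  have h0 : 0 ≤ c * (i:ℝ) := by positivity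
  have hξ1 : 0 ≤ ξ := le_trans h0 hξ.1.le
  have hξ2 : ξ ≤ c * ((i:ℝ)+1) := hξ.2.le
  have hden : c * ((i:ℝ)+1) - c * (i:ℝ) = c := by ring
  rw [hden] at hslope
  rw [← hslope]
  have h1 : 1 + c^2 * ((i:ℝ)+1)^2 = 1 + (c*((i:ℝ)+1))^2 := by ring
  rw [h1]
  have h2 : (0:ℝ) < 1 + ξ^2 := by positivity
  have h3 : (0:ℝ) < 1 + (c*((i:ℝ)+1))^2 := by positivity
  apply div_le_div_of_nonneg_left (by norm_num) h2
  nlinarith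

theorem arctan_sum (c : ℝ) (hc : 0 < c) (M : ℕ) :
    ∑ m ∈ Finset.Icc 1 M, 1 / (1 + c^2 * (m:ℝ)^2) ≤ Real.pi / (2 * c) := by
  have h1 : ∑ m ∈ Finset.Icc 1 M, 1 / (1 + c^2 * (m:ℝ)^2)
      = ∑ i ∈ Finset.range M, 1 / (1 + c^2 * ((i:ℝ)+1)^2) := by
    rw [← Finset.Ico_add_one_right_eq_Icc, Finset.sum_Ico_eq_sum_range]
    simp only [Nat.add_sub_cancel, Nat.succ_sub_one]
    apply Finset.sum_congr rfl
    intro i _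
    push_cast
    ring_nf
  rw [h1]
  have h2 : ∑ i ∈ Finset.range M, 1 / (1 + c^2 * ((i:ℝ)+1)^2)
      ≤ ∑ i ∈ Finset.range M,
        (Real.arctan (c*((i:ℝ)+1))/c - Real.arctan (c*(i:ℝ))/c) := by
    apply Finset.sum_le_sum
    intro i _
    have := arctan_step c hc i
    rw [sub_div] at this
    exact this
  have h3 : ∑ i ∈ Finset.range M,
      (Real.arctan (c*((i:ℝ)+1))/c - Real.arctan (c*(i:ℝ))/c)
      = Real.arctan (c*(M:ℝ))/c - Real.arctan (c*(0:ℕ))/c := by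
    have := Finset.sum_range_sub (fun i : ℕ => Real.arctan (c*(i:ℝ))/c) M
    simp only [Nat.cast_add, Nat.cast_one] at this ⊢
    convert this using 2
  refine le_trans h2 ?_
  rw [h3]
  simp only [Nat.cast_zero, mul_zero, Real.arctan_zero, zero_div, sub_zero]
  rw [div_le_div_iff₀ hc (by positivity)]
  have := (Real.arctan_lt_pi_div_two (c*(M:ℝ))).le
  nlinarith [Real.pi_pos]

theorem rank_lt {s : Finset ℤ} {w : ℤ → ℝ} {a b : ℤ} (ha : a ∈ s) (hb : b ∈ s)
    (hab : w a < w b ∨ (w a = w b ∧ a < b)) :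
    (s.filter (fun k' => w k' < w a ∨ (w k' = w a ∧ k' ≤ a))).card
      < (s.filter (fun k' => w k' < w b ∨ (w k' = w b ∧ k' ≤ b))).card := by
  apply Finset.card_lt_card
  rw [Finset.ssubset_iff_of_subset]
  · refine ⟨b, Finset.mem_filter.mpr ⟨hb, Or.inr ⟨rfl, le_refl _⟩⟩, ?_⟩
    simp only [Finset.mem_filter, not_and, not_or]
    intro _
    rcases hab with h | ⟨h1, h2⟩
    · constructor
      · linarith
      · intro he; exfalso; linarith [he.ge]
    · constructor
      · linarith
      · intro he; omega
  · intro k' hk'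
    obtain ⟨hks, hkp⟩ := Finset.mem_filter.mp hk'
    refine Finset.mem_filter.mpr ⟨hks, ?_⟩
    rcases hab with h | ⟨h1, h2⟩
    · rcases hkp with h' | ⟨h1', _⟩
      · exact Or.inl (by linarith)
      · exact Or.inl (by linarith [h1'.le])
    · rcases hkp with h' | ⟨h1', h2'⟩
      · exact Or.inl (by linarith)
      · exact Or.inr ⟨by linarith, by omega⟩

theorem rank_injOn (s : Finset ℤ) (w : ℤ → ℝ) :
    Set.InjOn (fun k => (s.filter (fun k' => w k' < w k ∨ (w k' = w k ∧ k' ≤ k))).card) s := by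
  intro a ha b hb hab
  by_contra hne
  simp only at hab
  rcases lt_trichotomy (w a) (w b) with h | h | h
  · exact absurd hab (ne_of_lt (rank_lt ha hb (Or.inl h)))
  · rcases lt_trichotomy a b with h' | h' | h'
    · exact absurd hab (ne_of_lt (rank_lt ha hb (Or.inr ⟨h, h'⟩)))
    · exact hne h'
    · exact absurd hab.symm (ne_of_lt (rank_lt hb ha (Or.inr ⟨h.symm, h'⟩)))
  · exact absurd hab.symm (ne_of_lt (rank_lt hb ha (Or.inl h)))
set_option maxHeartbeats 1000000 in
theorem main (ω : ℝ) (hω : ω ∈ Set.Ioo (0:ℝ) 1) (hirr : Irrational ω) (n : ℕ) (hn : 1 ≤ n)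
    (ℓ : ℤ) (hℓ₁ : 1 ≤ ℓ) (hℓ₂ : (ℓ : ℝ) ≤ (cfA ω (n + 1) : ℝ) / 4) :
    (∀ k : ℤ, ℓ * (cfQ ω n : ℤ) < k → k < (ℓ + 1) * (cfQ ω n : ℤ) →
      distZ ((k : ℝ) * ω) ≥ (3 / 4) * distZ ((cfQ ω (n - 1) : ℝ) * ω)) ∧
    (∀ Q : ℝ, 0 < Q →
      ∑ k ∈ Finset.Ioo (ℓ * (cfQ ω n : ℤ)) ((ℓ + 1) * (cfQ ω n : ℤ)),
          1 / (1 + Q ^ 2 * distZ ((k : ℝ) * ω) ^ 2)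
        ≤ 4 * Real.pi * (cfQ ω n : ℝ) / Q) := by
  classical
  have hQc : (cfQ ω n : ℤ) = QQ ω (n+1) := QQcast hω hirr n
  have hδpos : 0 < D ω n := D_pos hω hirr n
  have hprev : distZ ((cfQ ω (n - 1) : ℝ) * ω) ≤ D ω n := by
    obtain ⟨m, rfl⟩ := Nat.exists_eq_add_of_le hn
    have hc : ((cfQ ω m : ℤ) : ℝ) = ((QQ ω (m+1) : ℤ) : ℝ) := by
      exact_mod_cast congrArg (Int.cast : ℤ → ℝ) (QQcast hω hirr m)
    have hm : 1 + m - 1 = m := by omega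
    rw [hm]
    calc distZ ((cfQ ω m : ℝ) * ω) ≤ |(cfQ ω m : ℝ) * ω - ((P ω (1+m) : ℤ) : ℝ)| :=
          distZ_le _ _
      _ = |(QQ ω (1+m) : ℝ) * ω - (P ω (1+m) : ℝ)| := by
          push_cast at hc ⊢
          rw [hc, Nat.add_comm 1 m]
      _ = D ω (1+m) := hQE hω hirr (1+m)
  have hpt : ∀ k : ℤ, ℓ * (cfQ ω n : ℤ) < k → k < (ℓ + 1) * (cfQ ω n : ℤ) →
      3/4 * D ω n ≤ distZ ((k : ℝ) * ω) := by
    intro k hk1 hk2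
    rw [hQc] at hk1 hk2
    exact key hω hirr n hn ℓ hℓ₁ hℓ₂ k (round ((k:ℝ)*ω)) hk1 hk2
  constructor
  · intro k hk1 hk2
    have h0 := hpt k hk1 hk2
    have h1 : 0 ≤ distZ ((cfQ ω (n-1) : ℝ) * ω) := distZ_nonneg _
    calc (3/4) * distZ ((cfQ ω (n-1) : ℝ) * ω) ≤ 3/4 * D ω n := by linarith
      _ ≤ distZ ((k:ℝ) * ω) := h0
  · intro Q hQpos
    set q : ℤ := (cfQ ω n : ℤ) with hqdef
    have hq' : q = QQ ω (n+1) := hQc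
    set δ := D ω n with hδdef
    set s : Finset ℤ := Finset.Ioo (ℓ * q) ((ℓ + 1) * q) with hsdef
    set w : ℤ → ℝ := fun k => distZ ((k:ℝ) * ω) with hwdef
    set g : ℤ → ℝ := fun k => (k:ℝ) * ω - (round ((k:ℝ) * ω) : ℤ) with hgdef
    have hwg : ∀ k, w k = |g k| := fun k => rfl
    have hq1 : 1 ≤ q := by rw [hq']; exact (hQ hω hirr n).2.2
    have hδq : 1 ≤ 2 * (q:ℝ) * δ := by
      have hs1 := hS hω hirr n
      have h1 : (QQ ω n : ℝ) ≤ (QQ ω (n+1) : ℝ) := by exact_mod_cast (hQ hω hirr n).2.1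
      have h2 : D ω (n+1) ≤ D ω n := D_mono hω hirr n
      have h3 : 0 ≤ (QQ ω n : ℝ) := by exact_mod_cast (hQ hω hirr n).1
      have h4 : 0 < D ω (n+1) := D_pos hω hirr (n+1)
      have h5 : (q:ℝ) = ((QQ ω (n+1) : ℤ):ℝ) := by exact_mod_cast congrArg (Int.cast : ℤ → ℝ) hq'
      rw [h5]
      nlinarith
    have hw34 : ∀ k ∈ s, 3/4 * δ ≤ w k := by
      intro k hk
      obtain ⟨h1, h2⟩ := Finset.mem_Ioo.mp hk
      exact hpt k h1 h2
    have hsep : ∀ k ∈ s, ∀ k' ∈ s, k ≠ k' → δ ≤ |g k - g k'| := by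
      intro a ha b hb hne
      obtain ⟨ha1, ha2⟩ := Finset.mem_Ioo.mp ha
      obtain ⟨hb1, hb2⟩ := Finset.mem_Ioo.mp hb
      have hd0 : a - b ≠ 0 := sub_ne_zero.mpr hne
      have hdist : (ℓ+1) * q = ℓ * q + q := by ring
      have habs : |a - b| < QQ ω (n+1) := by
        rw [← hq', abs_lt]
        constructor <;> linarith
      have hba := BA hω hirr n hn (a-b) (round ((a:ℝ)*ω) - round ((b:ℝ)*ω)) hd0 habs
      have heq : ((a-b : ℤ):ℝ) * ω - (((round ((a:ℝ)*ω) - round ((b:ℝ)*ω)) : ℤ):ℝ)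
          = g a - g b := by
        rw [hgdef]; push_cast; ring
      rwa [heq] at hba
    set F : ℤ → Finset ℤ := fun k => s.filter (fun k' => w k' < w k ∨ (w k' = w k ∧ k' ≤ k))
      with hFdef
    set R : ℤ → ℕ := fun k => (F k).card with hRdef
    have hR1 : ∀ k ∈ s, 1 ≤ R k := by
      intro k hk
      exact Finset.card_pos.mpr ⟨k, Finset.mem_filter.mpr ⟨hk, Or.inr ⟨rfl, le_refl _⟩⟩⟩
    have hRs : ∀ k, R k ≤ s.card := fun k => Finset.card_filter_le _ _
    have hRw : ∀ k ∈ s, (R k : ℝ) * δ / 4 ≤ w k := by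
      intro k hk
      have hwk : 0 ≤ w k := distZ_nonneg _
      have hmemT : ∀ a ∈ F k, |g a| ≤ w k := by
        intro a hafil
        obtain ⟨has, hap⟩ := Finset.mem_filter.mp hafil
        rw [← hwg]
        rcases hap with h | ⟨h, _⟩
        · exact h.le
        · exact h.le
      have hsepT : ∀ a ∈ F k, ∀ b ∈ F k, a ≠ b → δ ≤ |g a - g b| := by
        intro a hafil b hbfil hne
        exact hsep a (Finset.mem_of_mem_filter _ hafil) b (Finset.mem_of_mem_filter _ hbfil) hne
      have hcs : ((R k : ℕ) : ℝ) ≤ 2 * w k / δ + 1 :=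
        count_sep hδpos hwk hmemT hsepT
      rcases Nat.lt_or_ge (R k) 2 with h | h
      · have hle : ((R k : ℕ):ℝ) ≤ 1 := by exact_mod_cast Nat.lt_succ_iff.mp h
        have := hw34 k hk
        nlinarith
      · have hge : (2:ℝ) ≤ ((R k : ℕ):ℝ) := by exact_mod_cast h
        have h7 : ((R k : ℕ):ℝ) - 1 ≤ 2 * w k / δ := by linarith
        have h8 : (((R k : ℕ):ℝ) - 1) * δ ≤ (2 * w k / δ) * δ :=
          mul_le_mul_of_nonneg_right h7 hδpos.le
        rw [div_mul_cancel₀ _ hδpos.ne'] at h8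
        nlinarith
    set c := Q * δ / 4 with hcdef
    have hc : 0 < c := by rw [hcdef]; positivity
    have hterm : ∀ k ∈ s, 1 / (1 + Q^2 * (w k)^2) ≤ 1 / (1 + c^2 * ((R k : ℕ):ℝ)^2) := by
      intro k hk
      apply one_div_le_one_div_of_le (by positivity)
      have h1 := hRw k hk
      have h2 : 0 ≤ ((R k : ℕ):ℝ) * δ / 4 := by positivity
      have h3 : (((R k : ℕ):ℝ) * δ / 4)^2 ≤ (w k)^2 := by nlinarith
      have h4 : c^2 * ((R k : ℕ):ℝ)^2 = Q^2 * (((R k : ℕ):ℝ) * δ / 4)^2 := by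
        rw [hcdef]; ring
      rw [h4]
      nlinarith [sq_nonneg Q]
    have hinj : ∀ x ∈ s, ∀ y ∈ s, R x = R y → x = y := by
      intro x hx y hy h
      exact rank_injOn s w hx hy h
    have hchain : ∑ k ∈ s, 1 / (1 + Q^2 * (w k)^2)
        ≤ 4 * Real.pi * (q:ℝ) / Q := by
      calc ∑ k ∈ s, 1 / (1 + Q^2 * (w k)^2)
          ≤ ∑ k ∈ s, 1 / (1 + c^2 * ((R k : ℕ):ℝ)^2) := Finset.sum_le_sum hterm
        _ = ∑ j ∈ s.image R, 1 / (1 + c^2 * ((j : ℕ):ℝ)^2) :=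
            (Finset.sum_image (f := fun j : ℕ => 1 / (1 + c ^ 2 * (j:ℝ) ^ 2)) hinj).symm
        _ ≤ ∑ j ∈ Finset.Icc 1 s.card, 1 / (1 + c^2 * ((j : ℕ):ℝ)^2) := by
            apply Finset.sum_le_sum_of_subset_of_nonneg
            · intro j hj
              obtain ⟨k, hk, rfl⟩ := Finset.mem_image.mp hj
              exact Finset.mem_Icc.mpr ⟨hR1 k hk, hRs k⟩
            · intro j _ _
              positivity
        _ ≤ Real.pi / (2*c) := arctan_sum c hc s.card
        _ ≤ 4 * Real.pi * (q:ℝ) / Q := by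
            rw [div_le_div_iff₀ (by positivity) hQpos, hcdef]
            have hqR : (1:ℝ) ≤ (q:ℝ) := by exact_mod_cast hq1
            nlinarith [Real.pi_pos,
              mul_le_mul_of_nonneg_left hδq (le_of_lt (mul_pos Real.pi_pos hQpos))]
    have hcast : ((cfQ ω n : ℕ):ℝ) = ((q:ℤ):ℝ) := by rw [hqdef]; push_cast; ring
    rw [hcast]
    exact hchain
end CF16

/-- lower bound on `‖kω‖` for `ℓq_n < k < (ℓ+1)q_n`, and the
resulting bound on the Fejér-type sum. -/
theorem norm_lower_bound_and_fejer_sum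
    (ω : ℝ) (hω : ω ∈ Set.Ioo (0:ℝ) 1) (hirr : Irrational ω) (n : ℕ) (hn : 1 ≤ n)
    (ℓ : ℤ) (hℓ₁ : 1 ≤ ℓ) (hℓ₂ : (ℓ : ℝ) ≤ (cfA ω (n + 1) : ℝ) / 4) :
    (∀ k : ℤ, ℓ * (cfQ ω n : ℤ) < k → k < (ℓ + 1) * (cfQ ω n : ℤ) →
      distZ ((k : ℝ) * ω) ≥ (3 / 4) * distZ ((cfQ ω (n - 1) : ℝ) * ω)) ∧
    (∀ Q : ℝ, 0 < Q →
      ∑ k ∈ Finset.Ioo (ℓ * (cfQ ω n : ℤ)) ((ℓ + 1) * (cfQ ω n : ℤ)),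
          1 / (1 + Q ^ 2 * distZ ((k : ℝ) * ω) ^ 2)
        ≤ 4 * Real.pi * (cfQ ω n : ℝ) / Q) := by
  exact CF16.main ω hω hirr n hn ℓ hℓ₁ hℓ₂

end
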